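/- Let B be an n×k complex matrix, s_1,…,s_k positive integers summing to n, and A the n×n matrix with s_j copies of the j-th column of B. Then |Per(A)| ≤ (s_1!⋯s_k!)/√(s_1^{s_1}⋯s_k^{s_k}) · ‖B‖^n. -/

import Mathlib

open Finset


/-- The operator (spectral) 2-norm of a complex matrix. -/
noncomputable def opNorm {m k : ℕ} (A : Matrix (Fin m) (Fin k) ℂ) : ℝ :=
  ‖LinearMap.toContinuousLinearMap (Matrix.toEuclideanLin A)‖


lemma perm_fiber_count {n k : ℕ} (c f : Fin n → Fin k)
    (h : ∀ j, (univ.filter fun i => f i = j).card = (univ.filter fun i => c i = j).card) :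
    (univ.filter fun σ : Equiv.Perm (Fin n) => c ∘ ⇑σ = f).card
      = ∏ j, ((univ.filter fun i => c i = j).card).factorial := by
  classical
  have hG : Function.Bijective
      (fun e : (∀ j, {i // f i = j} ≃ {i // c i = j}) =>
        (⟨Equiv.ofFiberEquiv e, funext fun a => Equiv.ofFiberEquiv_map e a⟩ :
          {σ : Equiv.Perm (Fin n) // c ∘ ⇑σ = f})) := by
    constructor
    · intro e e' hee
      have h2 : ∀ a, (Equiv.ofFiberEquiv e) a = (Equiv.ofFiberEquiv e') a := by
        intro a
        have := congrArg Subtype.val hee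
        exact congrFun (congrArg (fun σ : Equiv.Perm (Fin n) => ⇑σ) this) a
      funext j
      ext x : 1
      rcases x with ⟨a, rfl⟩
      exact Subtype.ext (h2 a)
    · rintro ⟨σ, hσ⟩
      have hcs : ∀ i, c (σ i) = f i := fun i => congrFun hσ i
      refine ⟨fun j =>
        { toFun := fun x => ⟨σ x.val, by rw [hcs x.val, x.prop]⟩
          invFun := fun y => ⟨σ.symm y.val, by
            have := hcs (σ.symm y.val); rw [Equiv.apply_symm_apply] at this
            rw [← this, y.prop]⟩
          left_inv := fun x => Subtype.ext (σ.symm_apply_apply x.val)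
          right_inv := fun y => Subtype.ext (σ.apply_symm_apply y.val) }, ?_⟩
      apply Subtype.ext
      apply Equiv.ext
      intro a
      rfl
  have := Fintype.card_of_bijective hG
  rw [show (univ.filter fun σ : Equiv.Perm (Fin n) => c ∘ ⇑σ = f).card
      = Fintype.card {σ : Equiv.Perm (Fin n) // c ∘ ⇑σ = f} from (Fintype.card_subtype _).symm,
    ← this, Fintype.card_pi]
  refine Finset.prod_congr rfl fun j _ => ?_
  have e : {i // f i = j} ≃ {i // c i = j} :=
    Fintype.equivOfCardEq (by rw [Fintype.card_subtype, Fintype.card_subtype]; exact h j)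
  rw [Fintype.card_equiv e, Fintype.card_subtype, h j]

lemma d_comp {n k : ℕ} (c : Fin n → Fin k) (σ : Equiv.Perm (Fin n)) (j : Fin k) :
    (univ.filter fun i => (c ∘ ⇑σ) i = j).card = (univ.filter fun i => c i = j).card :=
  Finset.card_equiv σ (fun i => by simp)

lemma sqrt_prod' {ι : Type*} (t : Finset ι) (g : ι → ℝ) (hg : ∀ i ∈ t, 0 ≤ g i) :
    Real.sqrt (∏ i ∈ t, g i) = ∏ i ∈ t, Real.sqrt (g i) := by
  classical
  induction t using Finset.cons_induction with
  | empty => simp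
  | cons a t ha ih =>
    rw [Finset.prod_cons, Finset.prod_cons, Real.sqrt_mul (hg a (Finset.mem_cons_self a t)),
      ih (fun i hi => hg i (Finset.mem_cons_of_mem hi))]

lemma omega_sum {N : ℕ} (hN : 0 < N) {ω : ℂ} (hω : IsPrimitiveRoot ω N) (m : ℤ) :
    ∑ u : Fin N, ω ^ (m * (u : ℕ)) = if (N : ℤ) ∣ m then (N : ℂ) else 0 := by
  have hω0 : ω ≠ 0 := hω.ne_zero hN.ne'
  have hrw : ∀ u : Fin N, ω ^ (m * (u : ℕ)) = (ω ^ m) ^ (u : ℕ) := by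
    intro u
    rw [zpow_mul, zpow_natCast]
  simp_rw [hrw]
  rw [Fin.sum_univ_eq_sum_range (fun u => (ω ^ m) ^ u) N]
  by_cases hd : (N : ℤ) ∣ m
  · rw [if_pos hd, (hω.zpow_eq_one_iff_dvd m).2 hd]
    simp
  · rw [if_neg hd]
    have hz1 : ω ^ m ≠ 1 := fun h => hd ((hω.zpow_eq_one_iff_dvd m).1 h)
    rw [geom_sum_eq hz1 N]
    have : (ω ^ m) ^ N = 1 := by
      rw [← zpow_natCast (ω ^ m) N, ← zpow_mul, mul_comm, zpow_mul, zpow_natCast, hω.pow_eq_one,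
        one_zpow]
    rw [this, sub_self, zero_div]

lemma amgm_sqrt {n : ℕ} (hn : 0 < n) (y : Fin n → ℝ) (hy : ∀ i, 0 ≤ y i) {M : ℝ}
    (hM : ∑ i, y i ^ 2 ≤ M) :
    ∏ i, y i ≤ Real.sqrt ((M / n) ^ n) := by
  have hM0 : 0 ≤ M := le_trans (Finset.sum_nonneg fun i _ => sq_nonneg _) hM
  set z : Fin n → ℝ := fun i => y i ^ 2 with hz
  have hzn : ∀ i ∈ univ, (0:ℝ) ≤ z i := fun i _ => sq_nonneg _
  have hgm := Real.geom_mean_le_arith_mean_weighted univ (fun _ => 1 / n) z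
    (fun i _ => by positivity) (by simp [Finset.card_univ]; field_simp) hzn
  have h1 : ∑ i, (1 / (n:ℝ)) * z i ≤ M / n := by
    simp_rw [one_div, inv_mul_eq_div]
    rw [← Finset.sum_div]
    have hn' : (0:ℝ) < n := by positivity
    gcongr
  have hgm2 : ∏ i, z i ^ (1 / (n:ℝ)) ≤ M / n := le_trans hgm h1
  have hprod : (∏ i, z i ^ (1 / (n:ℝ))) ^ n = ∏ i, z i := by
    rw [← Finset.prod_pow]
    refine Finset.prod_congr rfl fun i _ => ?_
    rw [← Real.rpow_natCast (z i ^ (1 / (n:ℝ))) n, ← Real.rpow_mul (sq_nonneg _)]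
    rw [one_div, inv_mul_cancel₀ (by positivity : (n:ℝ) ≠ 0), Real.rpow_one]
  have hzle : ∏ i, z i ≤ (M / n) ^ n := by
    rw [← hprod]
    exact pow_le_pow_left₀ (Finset.prod_nonneg fun i _ => Real.rpow_nonneg (sq_nonneg _) _) hgm2 n
  have hyz : ∏ i, y i = Real.sqrt (∏ i, z i) := by
    rw [sqrt_prod' _ _ hzn]
    exact (Finset.prod_congr rfl fun i _ => (Real.sqrt_sq (hy i)).symm)
  rw [hyz]
  exact Real.sqrt_le_sqrt hzle

lemma mulVec_sq_sum_le {m k : ℕ} (B : Matrix (Fin m) (Fin k) ℂ) (v : Fin k → ℂ) :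
    ∑ i, ‖B.mulVec v i‖ ^ 2 ≤ opNorm B ^ 2 * ∑ j, ‖v j‖ ^ 2 := by
  set T := LinearMap.toContinuousLinearMap (Matrix.toEuclideanLin B) with hT
  set vE : EuclideanSpace ℂ (Fin k) := (WithLp.equiv 2 (Fin k → ℂ)).symm v with hv
  have hTv : T vE = (WithLp.equiv 2 (Fin m → ℂ)).symm (B.mulVec v) := by
    simp [hT, hv]
  have h1 : ‖T vE‖ ≤ opNorm B * ‖vE‖ := T.le_opNorm vE
  have h2 : ‖T vE‖ ^ 2 = ∑ i, ‖B.mulVec v i‖ ^ 2 := by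
    rw [hTv, EuclideanSpace.norm_eq, Real.sq_sqrt (Finset.sum_nonneg fun _ _ => sq_nonneg _)]
    exact Finset.sum_congr rfl fun i _ => rfl
  have h3 : ‖vE‖ ^ 2 = ∑ j, ‖v j‖ ^ 2 := by
    rw [hv, EuclideanSpace.norm_eq, Real.sq_sqrt (Finset.sum_nonneg fun _ _ => sq_nonneg _)]
    exact Finset.sum_congr rfl fun j _ => rfl
  calc ∑ i, ‖B.mulVec v i‖ ^ 2 = ‖T vE‖ ^ 2 := h2.symm
    _ ≤ (opNorm B * ‖vE‖) ^ 2 := by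
        apply pow_le_pow_left₀ (norm_nonneg _) h1
    _ = opNorm B ^ 2 * ∑ j, ‖v j‖ ^ 2 := by rw [mul_pow, h3]

lemma sqrt_pow'' (x : ℝ) (hx : 0 ≤ x) (m : ℕ) : Real.sqrt x ^ m = Real.sqrt (x ^ m) := by
  rw [show x ^ m = ∏ _i ∈ Finset.range m, x by rw [Finset.prod_const, Finset.card_range],
    sqrt_prod' _ _ (fun _ _ => hx), Finset.prod_const, Finset.card_range]


/-- **Generalized permanent upper bound.**  Let `B` be `n × k` complex, `s_1,…,s_k > 0`
summing to `n`, and let `A` be the `n × n` matrix with `s_j` copies of the `j`-th column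
of `B`.  Then `|Per(A)| ≤ (s_1!⋯s_k!)/√(s_1^{s_1}⋯s_k^{s_k}) · ‖B‖^n`. -/
theorem permanent_multicolumn_bound (n k : ℕ) (s : Fin k → ℕ)
    (hpos : ∀ j, 0 < s j) (hsum : ∑ j, s j = n)
    (B : Matrix (Fin n) (Fin k) ℂ) (c : Fin n → Fin k)
    (hc : ∀ j, (Finset.univ.filter fun i => c i = j).card = s j)
    (A : Matrix (Fin n) (Fin n) ℂ) (hA : ∀ i m, A i m = B i (c m)) :
    ‖∑ σ : Equiv.Perm (Fin n), ∏ i, A i (σ i)‖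
      ≤ ((∏ j, (s j).factorial : ℕ) : ℝ) / Real.sqrt (∏ j, (s j : ℝ) ^ s j)
          * opNorm B ^ n := by
  classical
  rcases Nat.eq_zero_or_pos n with hn | hn
  · -- degenerate case n = 0
    subst hn
    haveI hk : IsEmpty (Fin k) := by
      by_contra h
      rw [not_isEmpty_iff] at h
      obtain ⟨j⟩ := h
      exact absurd (Finset.sum_eq_zero_iff.mp hsum j (Finset.mem_univ j)) (hpos j).ne'
    simp [Finset.univ_eq_empty (α := Fin k), Finset.univ_unique]
  -- main case
  have hn0 : (0:ℝ) < n := by exact_mod_cast hn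
  set N := n + 1 with hNdef
  have hNpos : 0 < N := Nat.succ_pos n
  set ω : ℂ := Complex.exp (2 * Real.pi * Complex.I / N) with hωdef
  have hω : IsPrimitiveRoot ω N := Complex.isPrimitiveRoot_exp N hNpos.ne'
  have hω0 : ω ≠ 0 := hω.ne_zero hNpos.ne'
  have habsω : ‖ω‖ = 1 := by
    rw [hωdef, show (2 * (Real.pi:ℂ) * Complex.I / (N:ℂ))
        = ((2 * Real.pi / N : ℝ) : ℂ) * Complex.I by push_cast; ring]
    exact Complex.norm_exp_ofReal_mul_I _
  set d : (Fin n → Fin k) → Fin k → ℕ :=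
    fun f j => (Finset.univ.filter fun i => f i = j).card with hd
  set coefB : (Fin n → Fin k) → ℂ := fun f => ∏ i, B i (f i) with hcoefB
  set T : Finset (Fin n → Fin k) := Finset.univ.filter (fun f => ∀ j, d f j = s j) with hT
  set S : ℂ := ∑ f ∈ T, coefB f with hS
  have hsle : ∀ j, s j ≤ n := fun j =>
    hsum ▸ Finset.single_le_sum (fun _ _ => Nat.zero_le _) (Finset.mem_univ j)
  have hdle : ∀ f j, d f j ≤ n := fun f j =>
    le_trans (Finset.card_filter_le _ _) (by simp)
  -- Step 1: permanent in terms of S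
  have hPer : ∑ σ : Equiv.Perm (Fin n), ∏ i, A i (σ i)
      = ((∏ j, (s j).factorial : ℕ) : ℂ) * S := by
    have h1 : ∀ σ : Equiv.Perm (Fin n), ∏ i, A i (σ i) = coefB (c ∘ ⇑σ) := fun σ =>
      Finset.prod_congr rfl fun i _ => by rw [hA]; rfl
    calc ∑ σ : Equiv.Perm (Fin n), ∏ i, A i (σ i)
        = ∑ σ : Equiv.Perm (Fin n), coefB (c ∘ ⇑σ) := Finset.sum_congr rfl fun σ _ => h1 σ
      _ = ∑ f : Fin n → Fin k, ∑ σ ∈ Finset.univ.filter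
            (fun σ : Equiv.Perm (Fin n) => c ∘ ⇑σ = f), coefB (c ∘ ⇑σ) :=
          (Finset.sum_fiberwise _ _ _).symm
      _ = ∑ f : Fin n → Fin k,
            (((Finset.univ.filter fun σ : Equiv.Perm (Fin n) => c ∘ ⇑σ = f).card : ℂ)
              * coefB f) := by
          refine Finset.sum_congr rfl fun f _ => ?_
          rw [Finset.sum_congr rfl (fun σ hσ => by rw [(Finset.mem_filter.1 hσ).2]),
            Finset.sum_const, nsmul_eq_mul]
      _ = ∑ f ∈ T, (((∏ j, (s j).factorial : ℕ) : ℂ) * coefB f) := by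
          rw [hT]
          rw [Finset.sum_filter]
          refine Finset.sum_congr rfl fun f _ => ?_
          by_cases hf : ∀ j, d f j = s j
          · rw [if_pos hf]
            congr 2
            rw [perm_fiber_count c f (fun j => by rw [hc j]; exact hf j)]
            exact Finset.prod_congr rfl fun j _ => by rw [hc j]
          · rw [if_neg hf]
            have hempty : (Finset.univ.filter fun σ : Equiv.Perm (Fin n) => c ∘ ⇑σ = f) = ∅ := by
              rw [Finset.filter_eq_empty_iff]
              intro σ _ hσ
              refine hf fun j => ?_
              rw [hd]
              dsimp only
              rw [← hσ, d_comp c σ j, hc j]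
            rw [hempty]
            simp
      _ = ((∏ j, (s j).factorial : ℕ) : ℂ) * S := by rw [hS, Finset.mul_sum]
  -- Step 2: Fourier identity
  set r : Fin k → ℝ := fun j => Real.sqrt (s j / n) with hr
  set x : (Fin k → Fin N) → Fin k → ℂ := fun t j => (r j : ℂ) * ω ^ ((t j : ℕ)) with hx
  have hFour : ∑ t : Fin k → Fin N,
        (∏ i, (B.mulVec (x t)) i) * ∏ j, ω ^ (-((s j : ℤ)) * ((t j : ℕ) : ℤ))
      = (N:ℂ) ^ k * ((∏ j, (r j : ℂ) ^ s j) * S) := by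
    have hexp : ∀ t : Fin k → Fin N, (∏ i, (B.mulVec (x t)) i)
        = ∑ f : Fin n → Fin k, coefB f * ∏ j, (x t j) ^ (d f j) := by
      intro t
      have hmv : ∀ i, (B.mulVec (x t)) i = ∑ j, B i j * x t j := fun i => by
        simp [Matrix.mulVec, dotProduct]
      calc ∏ i, (B.mulVec (x t)) i = ∏ i, ∑ j, B i j * x t j :=
            Finset.prod_congr rfl fun i _ => hmv i
        _ = ∑ f : Fin n → Fin k, ∏ i, (B i (f i) * x t (f i)) := Fintype.prod_sum _
        _ = ∑ f : Fin n → Fin k, coefB f * ∏ j, (x t j) ^ (d f j) := by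
            refine Finset.sum_congr rfl fun f _ => ?_
            rw [Finset.prod_mul_distrib]
            congr 1
            rw [← Finset.prod_fiberwise' Finset.univ f (fun j => x t j)]
            exact Finset.prod_congr rfl fun j _ => by rw [Finset.prod_const]
    have hinner : ∀ (f : Fin n → Fin k) (j : Fin k),
        (∑ u : Fin N, ((r j : ℂ) * ω ^ ((u:ℕ))) ^ (d f j) * ω ^ (-((s j : ℤ)) * ((u:ℕ):ℤ)))
          = (r j : ℂ) ^ (d f j) * (if d f j = s j then (N:ℂ) else 0) := by
      intro f j
      have hterm : ∀ u : Fin N, ((r j : ℂ) * ω ^ ((u:ℕ))) ^ (d f j)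
            * ω ^ (-((s j : ℤ)) * ((u:ℕ):ℤ))
          = (r j : ℂ) ^ (d f j) * ω ^ ((((d f j : ℤ)) - (s j : ℤ)) * ((u:ℕ):ℤ)) := by
        intro u
        rw [mul_pow, mul_assoc]
        congr 1
        rw [← pow_mul, ← zpow_natCast ω ((u:ℕ) * d f j), ← zpow_add₀ hω0]
        congr 1
        push_cast
        ring
      simp_rw [hterm]
      rw [← Finset.mul_sum, omega_sum hNpos hω (((d f j : ℤ)) - (s j : ℤ))]
      congr 1
      have hiff : ((N:ℤ) ∣ ((d f j : ℤ) - (s j : ℤ))) ↔ d f j = s j := by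
        constructor
        · intro hdvd
          obtain ⟨q, hq⟩ := hdvd
          have hb1 : (d f j : ℤ) ≤ n := by exact_mod_cast hdle f j
          have hb2 : (s j : ℤ) ≤ n := by exact_mod_cast hsle j
          have hb3 : (0:ℤ) ≤ d f j := Int.natCast_nonneg _
          have hb4 : (0:ℤ) ≤ s j := Int.natCast_nonneg _
          have hNn : (N:ℤ) = (n:ℤ) + 1 := by rw [hNdef]; push_cast; ring
          rw [hNn] at hq
          have habs : |(d f j : ℤ) - (s j : ℤ)| ≤ (n:ℤ) := by
            rw [abs_le]; constructor <;> omega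
          have hq0 : q = 0 := by
            by_contra hq0
            have h1 : (1:ℤ) ≤ |q| := Int.one_le_abs (by omega)
            rw [hq, abs_mul, abs_of_nonneg (by omega : (0:ℤ) ≤ (n:ℤ)+1)] at habs
            nlinarith
          rw [hq0, mul_zero] at hq
          have : (d f j : ℤ) = (s j : ℤ) := by omega
          exact_mod_cast this
        · intro h; rw [h]; simp
      by_cases hcase : d f j = s j
      · rw [if_pos hcase, if_pos (hiff.2 hcase)]
      · rw [if_neg hcase, if_neg (fun hdvd => hcase (hiff.1 hdvd))]
    calc ∑ t : Fin k → Fin N,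
          (∏ i, (B.mulVec (x t)) i) * ∏ j, ω ^ (-((s j : ℤ)) * ((t j : ℕ) : ℤ))
        = ∑ t : Fin k → Fin N, ∑ f : Fin n → Fin k,
            coefB f * ∏ j, ((x t j) ^ (d f j) * ω ^ (-((s j : ℤ)) * ((t j : ℕ) : ℤ))) := by
          refine Finset.sum_congr rfl fun t _ => ?_
          rw [hexp t, Finset.sum_mul]
          refine Finset.sum_congr rfl fun f _ => ?_
          rw [mul_assoc, ← Finset.prod_mul_distrib]
      _ = ∑ f : Fin n → Fin k, coefB f * ∑ t : Fin k → Fin N,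
            ∏ j, ((x t j) ^ (d f j) * ω ^ (-((s j : ℤ)) * ((t j : ℕ) : ℤ))) := by
          rw [Finset.sum_comm]
          exact Finset.sum_congr rfl fun f _ => (Finset.mul_sum _ _ _).symm
      _ = ∑ f : Fin n → Fin k, coefB f *
            ∏ j, ∑ u : Fin N, (((r j : ℂ) * ω ^ ((u:ℕ))) ^ (d f j)
              * ω ^ (-((s j : ℤ)) * ((u:ℕ):ℤ))) := by
          refine Finset.sum_congr rfl fun f _ => ?_
          congr 1
          simp_rw [hx]
          exact (Fintype.prod_sum fun (j : Fin k) (u : Fin N) => ((r j : ℂ) * ω ^ ((u:ℕ))) ^ (d f j)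
            * ω ^ (-((s j : ℤ)) * ((u:ℕ):ℤ))).symm
      _ = ∑ f : Fin n → Fin k, coefB f *
            ∏ j, ((r j : ℂ) ^ (d f j) * (if d f j = s j then (N:ℂ) else 0)) := by
          refine Finset.sum_congr rfl fun f _ => ?_
          congr 1
          exact Finset.prod_congr rfl fun j _ => hinner f j
      _ = ∑ f : Fin n → Fin k, (if (∀ j, d f j = s j) then
            ((N:ℂ) ^ k * ((∏ j, (r j : ℂ) ^ s j) * coefB f)) else 0) := by
          refine Finset.sum_congr rfl fun f _ => ?_
          by_cases hf : ∀ j, d f j = s j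
          · rw [if_pos hf, Finset.prod_mul_distrib]
            have e1 : (∏ j, (r j : ℂ) ^ (d f j)) = ∏ j, (r j : ℂ) ^ (s j) :=
              Finset.prod_congr rfl fun j _ => by rw [hf j]
            have e2 : (∏ j, (if d f j = s j then (N:ℂ) else 0)) = (N:ℂ) ^ k := by
              rw [show (∏ j, (if d f j = s j then (N:ℂ) else 0)) = ∏ _j : Fin k, (N:ℂ) from
                Finset.prod_congr rfl fun j _ => if_pos (hf j)]
              rw [Finset.prod_const, Finset.card_univ, Fintype.card_fin]
            rw [e1, e2]
            ring
          · rw [if_neg hf]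
            obtain ⟨j0, hj0⟩ := not_forall.mp hf
            rw [Finset.prod_eq_zero (Finset.mem_univ j0)
              (by rw [if_neg hj0, mul_zero] : (r j0 : ℂ) ^ (d f j0)
                * (if d f j0 = s j0 then (N:ℂ) else 0) = 0)]
            exact mul_zero _
      _ = (N:ℂ) ^ k * ((∏ j, (r j : ℂ) ^ s j) * S) := by
          rw [← Finset.sum_filter, ← hT, hS, Finset.mul_sum, Finset.mul_sum]
  -- Step 3: bound each Fourier term
  have hxnorm : ∀ t : Fin k → Fin N, ∑ j, ‖x t j‖ ^ 2 = 1 := by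
    intro t
    have h1 : ∀ j, ‖x t j‖ ^ 2 = (s j : ℝ) / n := by
      intro j
      have hrnn : 0 ≤ r j := Real.sqrt_nonneg _
      have habsx : ‖x t j‖ = r j := by
        rw [hx]
        dsimp only
        rw [norm_mul, norm_pow, habsω, one_pow, mul_one, Complex.norm_real, Real.norm_eq_abs]
        exact abs_of_nonneg hrnn
      rw [habsx, hr]
      dsimp only
      exact Real.sq_sqrt (by positivity)
    simp_rw [h1]
    rw [← Finset.sum_div, ← Nat.cast_sum, hsum, div_self hn0.ne']
  have hbound : ∀ t : Fin k → Fin N,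
      ‖(∏ i, (B.mulVec (x t)) i) * ∏ j, ω ^ (-((s j : ℤ)) * ((t j : ℕ) : ℤ))‖
        ≤ Real.sqrt ((opNorm B ^ 2 / n) ^ n) := by
    intro t
    rw [norm_mul]
    have hψ : ‖∏ j, ω ^ (-((s j : ℤ)) * ((t j : ℕ) : ℤ))‖ = 1 := by
      rw [norm_prod]
      refine Finset.prod_eq_one fun j _ => ?_
      rw [norm_zpow, habsω, one_zpow]
    rw [hψ, mul_one, norm_prod]
    exact amgm_sqrt hn (fun i => ‖(B.mulVec (x t)) i‖)
      (fun i => norm_nonneg _)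
      (le_trans (mulVec_sq_sum_le B (x t)) (by rw [hxnorm t, mul_one]))
  -- Step 4: conclude |S| bound
  have hQpos : 0 < Real.sqrt (∏ j, (s j : ℝ) ^ s j) := by
    apply Real.sqrt_pos.mpr
    apply Finset.prod_pos
    intro j _
    have := hpos j
    positivity
  have hSbound : ‖S‖ ≤ opNorm B ^ n / Real.sqrt (∏ j, (s j : ℝ) ^ s j) := by
    have hNk : (0:ℝ) < (N:ℝ) ^ k := by positivity
    have habs1 : ‖(N:ℂ) ^ k * ((∏ j, (r j : ℂ) ^ s j) * S)‖
        = (N:ℝ) ^ k * ((∏ j, r j ^ s j) * ‖S‖) := by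
      rw [norm_mul, norm_mul, norm_pow, norm_prod, Complex.norm_natCast]
      congr 2
      exact Finset.prod_congr rfl fun j _ => by
        rw [norm_pow, Complex.norm_real, Real.norm_eq_abs, abs_of_nonneg (Real.sqrt_nonneg _)]
    have hmain : (N:ℝ) ^ k * ((∏ j, r j ^ s j) * ‖S‖)
        ≤ (N:ℝ) ^ k * Real.sqrt ((opNorm B ^ 2 / n) ^ n) := by
      rw [← habs1, ← hFour]
      refine le_trans (norm_sum_le _ _) ?_
      calc ∑ t : Fin k → Fin N, ‖
            (∏ i, (B.mulVec (x t)) i) * ∏ j, ω ^ (-((s j : ℤ)) * ((t j : ℕ) : ℤ))‖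
          ≤ ∑ _t : Fin k → Fin N, Real.sqrt ((opNorm B ^ 2 / n) ^ n) :=
            Finset.sum_le_sum fun t _ => hbound t
        _ = (N:ℝ) ^ k * Real.sqrt ((opNorm B ^ 2 / n) ^ n) := by
            rw [Finset.sum_const, Finset.card_univ, Fintype.card_fun, Fintype.card_fin,
              Fintype.card_fin, nsmul_eq_mul]
            push_cast
            ring
    have hkey : (∏ j, r j ^ s j) * ‖S‖ ≤ Real.sqrt ((opNorm B ^ 2 / n) ^ n) :=
      le_of_mul_le_mul_left hmain hNk
    -- arithmetic simplifications
    have hrs : (∏ j, r j ^ s j)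
        = Real.sqrt (∏ j, (s j : ℝ) ^ s j) / Real.sqrt ((n:ℝ) ^ n) := by
      have h1 : ∀ j, r j ^ s j = Real.sqrt (((s j : ℝ) / n) ^ s j) := fun j => by
        rw [hr]; dsimp only; rw [sqrt_pow'' _ (by positivity)]
      rw [Finset.prod_congr rfl fun j _ => h1 j, ← sqrt_prod' _ _ (fun j _ => by positivity)]
      rw [show (∏ j, ((s j : ℝ) / n) ^ s j) = (∏ j, (s j : ℝ) ^ s j) / (n:ℝ) ^ n by
        simp_rw [div_pow]
        rw [Finset.prod_div_distrib, Finset.prod_pow_eq_pow_sum, hsum]]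
      rw [Real.sqrt_div (Finset.prod_nonneg fun j _ => by positivity)]
    have hM : Real.sqrt ((opNorm B ^ 2 / n) ^ n) = opNorm B ^ n / Real.sqrt ((n:ℝ) ^ n) := by
      rw [show (opNorm B ^ 2 / (n:ℝ)) ^ n = (opNorm B ^ n) ^ 2 / (n:ℝ) ^ n by
        rw [div_pow, ← pow_mul, ← pow_mul, mul_comm 2 n]]
      have hPn : (0:ℝ) ≤ opNorm B ^ n := pow_nonneg (norm_nonneg _) n
      rw [Real.sqrt_div (sq_nonneg _), Real.sqrt_sq hPn]
    rw [hrs, hM] at hkey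
    have hnn : (0:ℝ) < Real.sqrt ((n:ℝ) ^ n) := Real.sqrt_pos.mpr (by positivity)
    rw [div_mul_eq_mul_div, div_le_div_iff₀ hnn hnn] at hkey
    have hkey2 : Real.sqrt (∏ j, (s j : ℝ) ^ s j) * ‖S‖ ≤ opNorm B ^ n := by
      have := mul_le_mul_of_nonneg_right hkey (le_of_lt (by positivity : (0:ℝ) < (Real.sqrt ((n:ℝ)^n))⁻¹))
      calc Real.sqrt (∏ j, (s j : ℝ) ^ s j) * ‖S‖
          = Real.sqrt (∏ j, (s j : ℝ) ^ s j) * ‖S‖ * Real.sqrt ((n:ℝ)^n)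
            * (Real.sqrt ((n:ℝ)^n))⁻¹ := by
            field_simp
        _ ≤ opNorm B ^ n * Real.sqrt ((n:ℝ)^n) * (Real.sqrt ((n:ℝ)^n))⁻¹ := by
            gcongr
        _ = opNorm B ^ n := by field_simp
    exact (le_div_iff₀ hQpos).2 (by rw [mul_comm]; exact hkey2)
  -- final assembly
  rw [hPer, norm_mul, Complex.norm_natCast]
  calc ((∏ j, (s j).factorial : ℕ) : ℝ) * ‖S‖
      ≤ ((∏ j, (s j).factorial : ℕ) : ℝ)
          * (opNorm B ^ n / Real.sqrt (∏ j, (s j : ℝ) ^ s j)) :=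
        mul_le_mul_of_nonneg_left hSbound (by positivity)
    _ = ((∏ j, (s j).factorial : ℕ) : ℝ) / Real.sqrt (∏ j, (s j : ℝ) ^ s j)
          * opNorm B ^ n := by ring
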